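/- Let R > 0 and y ∈ ℝ³ with 0 < ‖y‖ < R, set ȳ = (R²/‖y‖²) y, and define 𝒢(x, y) = 1/(4π‖x − y‖) + (‖x‖² + ‖y‖²)/(8πR³) + R/(4π‖y‖·‖x − ȳ‖) + (1/(4πR)) log(2R²/(R² − ⟨x, y⟩ + ‖y‖·‖x − ȳ‖)). Then the Neumann boundary condition holds on the sphere of radius R: for every x with ‖x‖ = R, the radial derivative vanishes, i.e. ⟨x, ∇_x 𝒢(x, y)⟩ = 0. -/

import Mathlib

open Real
open scoped RealInnerProductSpace

lemma hasFDerivAt_norm_of_ne {E : Type*} [NormedAddCommGroup E] [InnerProductSpace ℝ E]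
    {z : E} (hz : z ≠ 0) :
    HasFDerivAt (fun w : E => ‖w‖) (‖z‖⁻¹ • innerSL ℝ z) z := by
  have h2 : HasFDerivAt (fun w : E => ‖w‖ ^ 2) (2 • innerSL ℝ z) z :=
    (hasStrictFDerivAt_norm_sq z).hasFDerivAt
  have hz0 : (0:ℝ) < ‖z‖ := norm_pos_iff.mpr hz
  have hs : HasDerivAt Real.sqrt (1 / (2 * Real.sqrt (‖z‖ ^ 2))) (‖z‖ ^ 2) :=
    Real.hasDerivAt_sqrt (by positivity)
  have h3 := hs.comp_hasFDerivAt z h2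
  have he : Real.sqrt ∘ (fun w : E => ‖w‖ ^ 2) = fun w : E => ‖w‖ := by
    funext w; simp [Real.sqrt_sq (norm_nonneg w)]
  rw [he] at h3
  refine h3.congr_fderiv ?_
  rw [Real.sqrt_sq hz0.le]
  ext w
  simp only [ContinuousLinearMap.smul_apply, innerSL_apply_apply, smul_eq_mul, nsmul_eq_mul,
    Nat.cast_ofNat]
  field_simp

/-- The Neumann function of the ball `B_R ⊆ ℝ³`, written out explicitly:
`𝒢(x, y) = 1/(4π‖x − y‖) + (‖x‖² + ‖y‖²)/(8πR³) + R/(4π‖y‖‖x − ȳ‖)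
  + (1/(4πR)) log(2R²/(R² − ⟨x,y⟩ + ‖y‖‖x − ȳ‖))`, where `ȳ = (R²/‖y‖²) y`. -/
noncomputable def Gneu (R : ℝ) (x y : EuclideanSpace ℝ (Fin 3)) : ℝ :=
  1 / (4 * π * ‖x - y‖) + (‖x‖ ^ 2 + ‖y‖ ^ 2) / (8 * π * R ^ 3)
    + R / (4 * π * ‖y‖ * ‖x - (R ^ 2 / ‖y‖ ^ 2) • y‖)
    + (1 / (4 * π * R)) *
        Real.log (2 * R ^ 2 / (R ^ 2 - ⟪x, y⟫ + ‖y‖ * ‖x - (R ^ 2 / ‖y‖ ^ 2) • y‖))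

set_option maxHeartbeats 1000000 in
/-- The Neumann boundary condition for the Neumann function of the ball: for
`0 < ‖y‖ < R` and every boundary point `x` with `‖x‖ = R`, the radial (outward normal)
derivative vanishes, i.e. `⟨x, ∇_x 𝒢(x, y)⟩ = 0`. -/
theorem neumann_boundary_condition (R : ℝ) (hR : 0 < R)
    (y : EuclideanSpace ℝ (Fin 3)) (hy0 : 0 < ‖y‖) (hyR : ‖y‖ < R)
    (x : EuclideanSpace ℝ (Fin 3)) (hx : ‖x‖ = R) :
    ⟪x, gradient (fun x => Gneu R x y) x⟫ = 0 := by
  set yb : EuclideanSpace ℝ (Fin 3) := (R ^ 2 / ‖y‖ ^ 2) • y with hyb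
  have hπ : (0:ℝ) < π := Real.pi_pos
  -- basic nonvanishing
  have hxy : x - y ≠ 0 := by
    intro h
    have hxeq : x = y := sub_eq_zero.mp h
    rw [hxeq] at hx
    exact (ne_of_lt hyR) hx
  have hr0 : (0:ℝ) < ‖x - y‖ := norm_pos_iff.mpr hxy
  -- the image identity: ‖y‖ * ‖x - yb‖ = R * ‖x - y‖
  have hinner_yb : ⟪x, yb⟫ = (R ^ 2 / ‖y‖ ^ 2) * ⟪x, y⟫ := real_inner_smul_right x y _
  have hnyb : ‖yb‖ = R ^ 2 / ‖y‖ := by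
    rw [hyb, norm_smul]
    rw [Real.norm_eq_abs, abs_of_pos (by positivity)]
    field_simp [hy0.ne']
  have hr2 : ‖x - y‖ ^ 2 = R ^ 2 - 2 * ⟪x, y⟫ + ‖y‖ ^ 2 := by
    rw [norm_sub_sq_real, hx]
  have hsq : ‖x - yb‖ ^ 2 = (R * ‖x - y‖ / ‖y‖) ^ 2 := by
    have hrw : (R * ‖x - y‖ / ‖y‖) ^ 2 = R ^ 2 * ‖x - y‖ ^ 2 / ‖y‖ ^ 2 := by ring
    rw [norm_sub_sq_real, hinner_yb, hnyb, hx, hrw, hr2]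
    field_simp [hy0.ne']
    ring
  have hρ : ‖x - yb‖ = R * ‖x - y‖ / ‖y‖ := by
    have h := congrArg Real.sqrt hsq
    rwa [Real.sqrt_sq (norm_nonneg _), Real.sqrt_sq (by positivity)] at h
  have hρ0 : (0:ℝ) < ‖x - yb‖ := by
    rw [hρ]; exact div_pos (mul_pos hR hr0) hy0
  have hxyb : x - yb ≠ 0 := by
    intro h; rw [h, norm_zero] at hρ0; exact lt_irrefl _ hρ0
  have hCS : ⟪x, y⟫ ≤ R * ‖y‖ := by
    have := real_inner_le_norm x y
    rwa [hx] at this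
  have htR : ⟪x, y⟫ < R ^ 2 := lt_of_le_of_lt hCS (by nlinarith)
  have hDpos : (0:ℝ) < R ^ 2 - ⟪x, y⟫ + ‖y‖ * ‖x - yb‖ := by
    nlinarith [mul_pos hy0 hρ0]
  -- inner derivative blocks
  have hN1 : HasFDerivAt (fun w : EuclideanSpace ℝ (Fin 3) => ‖w - y‖)
      ((‖x - y‖⁻¹ • innerSL ℝ (x - y)).comp (ContinuousLinearMap.id ℝ (EuclideanSpace ℝ (Fin 3)))) x :=
    (hasFDerivAt_norm_of_ne hxy).comp x ((hasFDerivAt_id x).sub_const y)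
  have hN3 : HasFDerivAt (fun w : EuclideanSpace ℝ (Fin 3) => ‖w - yb‖)
      ((‖x - yb‖⁻¹ • innerSL ℝ (x - yb)).comp (ContinuousLinearMap.id ℝ (EuclideanSpace ℝ (Fin 3)))) x :=
    (hasFDerivAt_norm_of_ne hxyb).comp x ((hasFDerivAt_id x).sub_const yb)
  have hN2 : HasFDerivAt (fun w : EuclideanSpace ℝ (Fin 3) => ‖w‖ ^ 2) (2 • innerSL ℝ x) x :=
    (hasStrictFDerivAt_norm_sq x).hasFDerivAt
  have hIn : HasFDerivAt (fun w : EuclideanSpace ℝ (Fin 3) => ⟪w, y⟫) (innerSL ℝ y) x := by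
    have h := (innerSL ℝ y).hasFDerivAt (x := x)
    refine h.congr_of_eventuallyEq (Filter.Eventually.of_forall fun v => ?_)
    exact real_inner_comm y v
  -- term 1
  have ho1 : HasDerivAt (fun t : ℝ => 1 / (4 * π * t))
      ((0 * (4 * π * ‖x - y‖) - 1 * (4 * π * 1)) / (4 * π * ‖x - y‖) ^ 2) ‖x - y‖ :=
    (hasDerivAt_const _ (1:ℝ)).div (HasDerivAt.const_mul (4 * π) (hasDerivAt_id _))
      (by positivity)
  have h1 := ho1.comp_hasFDerivAt x hN1
  -- term 2
  have ho2 : HasDerivAt (fun t : ℝ => (t + ‖y‖ ^ 2) / (8 * π * R ^ 3))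
      (1 / (8 * π * R ^ 3)) (‖x‖ ^ 2) :=
    ((hasDerivAt_id _).add_const _).div_const _
  have h2 := ho2.comp_hasFDerivAt x hN2
  -- term 3
  have ho3 : HasDerivAt (fun t : ℝ => R / (4 * π * ‖y‖ * t))
      ((0 * (4 * π * ‖y‖ * ‖x - yb‖) - R * (4 * π * ‖y‖ * 1)) / (4 * π * ‖y‖ * ‖x - yb‖) ^ 2)
      ‖x - yb‖ :=
    (hasDerivAt_const _ R).div (HasDerivAt.const_mul (4 * π * ‖y‖) (hasDerivAt_id _))
      (by positivity)
  have h3 := ho3.comp_hasFDerivAt x hN3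
  -- term 4
  have hD : HasFDerivAt (fun w : EuclideanSpace ℝ (Fin 3) =>
        R ^ 2 - ⟪w, y⟫ + ‖y‖ * ‖w - yb‖)
      (((0 : EuclideanSpace ℝ (Fin 3) →L[ℝ] ℝ) - innerSL ℝ y) +
        ‖y‖ • ((‖x - yb‖⁻¹ • innerSL ℝ (x - yb)).comp
          (ContinuousLinearMap.id ℝ (EuclideanSpace ℝ (Fin 3))))) x :=
    ((hasFDerivAt_const (R ^ 2) x).sub hIn).add (hN3.const_mul ‖y‖)
  set Dv : ℝ := R ^ 2 - ⟪x, y⟫ + ‖y‖ * ‖x - yb‖ with hDv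
  have hq : (2 * R ^ 2) / Dv ≠ 0 := by positivity
  have hdiv : HasDerivAt (fun t : ℝ => 2 * R ^ 2 / t)
      ((0 * Dv - 2 * R ^ 2 * 1) / Dv ^ 2) Dv :=
    (hasDerivAt_const Dv (2 * R ^ 2)).div (hasDerivAt_id Dv) hDpos.ne'
  have hlog := hdiv.log hq
  have ho4 := HasDerivAt.const_mul (1 / (4 * π * R)) hlog
  have h4 := ho4.comp_hasFDerivAt_of_eq x hD hDv
  -- total
  have hG := ((h1.add h2).add h3).add h4
  have hG2 : HasFDerivAt (fun x => Gneu R x y) _ x := hG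
  rw [real_inner_comm, hG2.hasGradientAt.gradient, InnerProductSpace.toDual_symm_apply]
  simp only [ContinuousLinearMap.add_apply, ContinuousLinearMap.smul_apply,
    ContinuousLinearMap.comp_apply, ContinuousLinearMap.coe_id', id_eq,
    ContinuousLinearMap.sub_apply, ContinuousLinearMap.zero_apply, innerSL_apply_apply,
    smul_eq_mul, nsmul_eq_mul, Nat.cast_ofNat]
  have e1 : ⟪x - y, x⟫ = R ^ 2 - ⟪x, y⟫ := by
    rw [inner_sub_left, real_inner_self_eq_norm_sq, hx, real_inner_comm y x]
  have e2 : ⟪x - yb, x⟫ = R ^ 2 - R ^ 2 / ‖y‖ ^ 2 * ⟪x, y⟫ := by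
    rw [inner_sub_left, real_inner_self_eq_norm_sq, hx, ← real_inner_comm yb x, hinner_yb]
  have e3 : ⟪y, x⟫ = ⟪x, y⟫ := real_inner_comm x y
  have hDval : Dv = R ^ 2 - ⟪x, y⟫ + R * ‖x - y‖ := by
    rw [hDv, hρ]; field_simp [hy0.ne']
  have hDval0 : (0:ℝ) < R ^ 2 - ⟪x, y⟫ + R * ‖x - y‖ := hDval ▸ hDpos
  have exx : ⟪x, x⟫ = R ^ 2 := by rw [real_inner_self_eq_norm_sq, hx]
  rw [e1, e2, e3, exx, hρ, hDval]
  set r := ‖x - y‖ with hrdef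
  set s := ‖y‖ with hsdef
  set t : ℝ := ⟪x, y⟫ with htdef
  have hD2 : (0:ℝ) < r * R + (R ^ 2 - t) := by rw [hrdef, htdef]; nlinarith [hDval0]
  field_simp [hr0.ne', hy0.ne', hR.ne', hπ.ne', hDval0.ne', hD2.ne', (show R ^ 2 - t + r * R ≠ 0 by nlinarith [hD2])]
  linear_combination 16 * R ^ 3 * s * (r ^ 2 + (R ^ 2 - t + r * R)) * hr2
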